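/- Lewis's general Comparative Possibility Rule is semantically valid: for any finite family $B_1, \ldots, B_n$ ($n \geq 1$) of subsets of $\mathcal{W}$ and any $A \subseteq \mathcal{W}$ with $A \subseteq B_1 \cup \cdots \cup B_n$, if $\$(\chi)$ is totally ordered by inclusion, then there exists $i \in \{1,\ldots,n\}$ such that every sphere $S \in \$(\chi)$ with $S \cap A \neq \emptyset$ satisfies $S \cap B_i \neq \emptyset$. -/

import Mathlib

/-- Lewis's general Comparative Possibility Rule is semantically valid:
if `A ⊆ B₁ ∪ ⋯ ∪ Bₙ` (with `n ≥ 1`) then `Bᵢ ≼ A` for some `i`, over a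
nested sphere system. -/
theorem cpr_general {W : Type*} [Nonempty W]
    (Sph : Set (Set W)) (hchain : IsChain (· ⊆ ·) Sph)
    (n : ℕ) (hn : 1 ≤ n) (B : Fin n → Set W) (A : Set W)
    (hsub : A ⊆ ⋃ i, B i) :
    ∃ i : Fin n, ∀ S ∈ Sph, (S ∩ A).Nonempty → (S ∩ B i).Nonempty := by
  classical
  by_contra h
  push_neg at h
  choose f hfS hfA hfB using h
  have hne : n ≠ 0 := by omega
  have : Nonempty (Fin n) := Fin.pos_iff_nonempty.mp (by omega)
  -- the finset of chosen spheres
  set t : Finset (Set W) := Finset.image f Finset.univ with ht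
  have htne : t.Nonempty := Finset.image_nonempty.mpr Finset.univ_nonempty
  obtain ⟨m, hmt, hmin⟩ := t.exists_minimal htne
  -- m is least among the f i's
  have hleast : ∀ i, m ⊆ f i := by
    intro i
    have hfi : f i ∈ t := Finset.mem_image_of_mem f (Finset.mem_univ i)
    obtain ⟨j, _, hj⟩ := Finset.mem_image.mp hmt
    rcases eq_or_ne m (f i) with rfl | hne'
    · exact subset_rfl
    · rcases hchain (hj ▸ hfS j) (hfS i) hne' with h1 | h2
      · exact h1
      · exact absurd (Set.Subset.antisymm (hmin hfi h2) h2) hne'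
  -- m meets A
  obtain ⟨j, _, hj⟩ := Finset.mem_image.mp hmt
  obtain ⟨x, hxm, hxA⟩ := hj ▸ hfA j
  obtain ⟨_, ⟨i, rfl⟩, hxB⟩ := hsub hxA
  have hni : (f i ∩ B i).Nonempty := ⟨x, hleast i hxm, hxB⟩
  rw [hfB i] at hni
  exact Set.not_nonempty_empty hni
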